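/- The set P of synthematic totals has exactly six elements, and the natural action of Equiv.Perm (Fin 6) on P defines an injective (hence bijective, since both groups have order 720) group homomorphism σ : Equiv.Perm (Fin 6) → Equiv.Perm P. Moreover, for every bijection e : P ≃ Fin 6, the automorphism of Equiv.Perm (Fin 6) obtained by conjugating σ by e (i.e., g ↦ e ∘ σ(g) ∘ e⁻¹) is not an inner automorphism of Equiv.Perm (Fin 6). -/

import Mathlib

set_option maxRecDepth 10000
set_option synthInstance.maxSize 2000
set_option synthInstance.maxHeartbeats 2000000
set_option maxHeartbeats 1000000

/-- A syntheme: a partition of the six colors into three unordered pairs. -/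
def IsSyntheme (s : Finset (Finset (Fin 6))) : Prop :=
  s.card = 3 ∧ (∀ p ∈ s, p.card = 2) ∧ ∀ i : Fin 6, ∃! p, p ∈ s ∧ i ∈ p

/-- A synthematic total: a set of five synthemes such that each of the fifteen unordered
pairs of colors belongs to exactly one of the five synthemes. -/
def IsSynTotal (t : Finset (Finset (Finset (Fin 6)))) : Prop :=
  t.card = 5 ∧ (∀ s ∈ t, IsSyntheme s) ∧
    ∀ p : Finset (Fin 6), p.card = 2 → ∃! s, s ∈ t ∧ p ∈ s

/-- The set of synthematic totals. -/
def SynTotal := {t : Finset (Finset (Finset (Fin 6))) // IsSynTotal t}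

/-! ### Decidability instances -/

lemma existsUnique_mem_iff {α : Type*} (s : Finset α) (P : α → Prop) :
    (∃! x, x ∈ s ∧ P x) ↔ ∃ x ∈ s, P x ∧ ∀ y ∈ s, P y → y = x := by
  constructor
  · rintro ⟨x, ⟨hx, hP⟩, hu⟩; exact ⟨x, hx, hP, fun y hy hPy => hu y ⟨hy, hPy⟩⟩
  · rintro ⟨x, hx, hP, hu⟩; exact ⟨x, ⟨hx, hP⟩, fun y ⟨hy, hPy⟩ => hu y hy hPy⟩

instance : DecidablePred IsSyntheme := fun s =>
  decidable_of_iff (s.card = 3 ∧ (∀ p ∈ s, p.card = 2) ∧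
      ∀ i : Fin 6, ∃ p ∈ s, i ∈ p ∧ ∀ q ∈ s, i ∈ q → q = p)
    (by unfold IsSyntheme
        exact and_congr_right fun _ => and_congr_right fun _ =>
          forall_congr' fun i => (existsUnique_mem_iff _ _).symm)

/-! ### Explicit tables -/

def φp : Fin 15 → Finset (Fin 6) := ![{0,1},{0,2},{0,3},{0,4},{0,5},{1,2},{1,3},{1,4},{1,5},{2,3},{2,4},{2,5},{3,4},{3,5},{4,5}]
def ψs : Fin 15 → Finset (Finset (Fin 6)) := ![{{0,1},{2,3},{4,5}},{{0,1},{2,4},{3,5}},{{0,1},{2,5},{3,4}},{{0,2},{1,3},{4,5}},{{0,2},{1,4},{3,5}},{{0,2},{1,5},{3,4}},{{0,3},{1,2},{4,5}},{{0,3},{1,4},{2,5}},{{0,3},{1,5},{2,4}},{{0,4},{1,2},{3,5}},{{0,4},{1,3},{2,5}},{{0,4},{1,5},{2,3}},{{0,5},{1,2},{3,4}},{{0,5},{1,3},{2,4}},{{0,5},{1,4},{2,3}}]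
def vtot : Fin 6 → Fin 5 → Finset (Finset (Fin 6)) := ![![{{0,1},{2,3},{4,5}},{{0,2},{1,4},{3,5}},{{0,3},{1,5},{2,4}},{{0,4},{1,3},{2,5}},{{0,5},{1,2},{3,4}}],![{{0,1},{2,3},{4,5}},{{0,2},{1,5},{3,4}},{{0,3},{1,4},{2,5}},{{0,4},{1,2},{3,5}},{{0,5},{1,3},{2,4}}],![{{0,1},{2,4},{3,5}},{{0,2},{1,3},{4,5}},{{0,3},{1,4},{2,5}},{{0,4},{1,5},{2,3}},{{0,5},{1,2},{3,4}}],![{{0,1},{2,4},{3,5}},{{0,2},{1,5},{3,4}},{{0,3},{1,2},{4,5}},{{0,4},{1,3},{2,5}},{{0,5},{1,4},{2,3}}],![{{0,1},{2,5},{3,4}},{{0,2},{1,3},{4,5}},{{0,3},{1,5},{2,4}},{{0,4},{1,2},{3,5}},{{0,5},{1,4},{2,3}}],![{{0,1},{2,5},{3,4}},{{0,2},{1,4},{3,5}},{{0,3},{1,2},{4,5}},{{0,4},{1,5},{2,3}},{{0,5},{1,3},{2,4}}]]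
def Ttot (k : Fin 6) : Finset (Finset (Finset (Fin 6))) := Finset.univ.image (vtot k)
def TotF : Finset (Finset (Finset (Finset (Fin 6)))) := Finset.univ.image Ttot
def cS : Fin 15 → Finset (Fin 15) := ![{0,9,14},{0,10,13},{0,11,12},{1,6,14},{1,7,13},{1,8,12},{2,5,14},{2,7,11},{2,8,10},{3,5,13},{3,6,11},{3,8,9},{4,5,12},{4,6,10},{4,7,9}]
def cT : Fin 6 → Finset (Fin 15) := ![{0,4,8,10,12},{0,5,7,9,13},{1,3,7,11,12},{1,5,6,10,14},{2,3,8,9,14},{2,4,6,11,13}]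
def codeSynF : Finset (Finset (Fin 15)) := Finset.univ.image cS
def codeTotF : Finset (Finset (Fin 15)) := Finset.univ.image cT

/-- Disjointness of synthemes, as a named predicate (for instance synthesis). -/
def SD (i j : Fin 15) : Prop := ∀ p ∈ ψs i, p ∉ ψs j
instance (i j : Fin 15) : Decidable (SD i j) := by unfold SD; infer_instance

/-! ### Computational lemmas (kernel decides) -/

lemma idxP : ∀ p : Finset (Fin 6), p.card = 2 → ∃ j : Fin 15, φp j = p := by decide

lemma synD : ∀ i1 i2 : Fin 15, (∀ x ∈ φp i1, x ∉ φp i2) → ∀ i3 : Fin 15,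
    (∀ x ∈ φp i1, x ∉ φp i3) → (∀ x ∈ φp i2, x ∉ φp i3) →
    ({i1,i2,i3} : Finset (Fin 15)) ∈ codeSynF := by decide

lemma totD : ∀ i1 i2 : Fin 15, SD i1 i2 → ∀ i3 : Fin 15, SD i1 i3 → SD i2 i3 → ∀ i4 : Fin 15,
    SD i1 i4 → SD i2 i4 → SD i3 i4 → ∀ i5 : Fin 15,
    SD i1 i5 → SD i2 i5 → SD i3 i5 → SD i4 i5 →
    ({i1,i2,i3,i4,i5} : Finset (Fin 15)) ∈ codeTotF := by decide

lemma synCode : ∀ m : Fin 15, ψs m = (cS m).image φp := by decide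

lemma totCode : ∀ k : Fin 6, (cT k).image ψs = Ttot k := by decide

lemma synIsSyn : ∀ k : Fin 6, ∀ a : Fin 5, IsSyntheme (vtot k a) := by decide

lemma covD : ∀ k : Fin 6, ∀ p : Finset (Fin 6), p.card = 2 → ∃ a : Fin 5, p ∈ vtot k a := by decide

lemma disjD : ∀ k : Fin 6, ∀ a b : Fin 5, a ≠ b → ∀ p ∈ vtot k a, p ∉ vtot k b := by decide

lemma cardD : ∀ k : Fin 6, (Ttot k).card = 5 := by decide

lemma cardTotF : TotF.card = 6 := by decide

lemma memTable : ∀ k : Fin 6, ∀ a : Fin 5, ∃ i : Fin 15, ψs i = vtot k a := by decide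

lemma fingS : ∀ i i' : Fin 15, (∀ k : Fin 6, ψs i ∈ Ttot k → ψs i' ∈ Ttot k) → i' = i := by decide

lemma existsK : ∀ i : Fin 15, ∃ k : Fin 6, ψs i ∈ Ttot k := by decide

lemma elemSyn : ∀ i : Fin 15, ∀ q ∈ ψs i, ∃ j : Fin 15, φp j = q := by decide

lemma fingP : ∀ j j' : Fin 15, (∀ i : Fin 15, φp j ∈ ψs i → φp j' ∈ ψs i) → j' = j := by decide

lemma existsI : ∀ j : Fin 15, ∃ i : Fin 15, φp j ∈ ψs i := by decide

lemma fingX : ∀ x y : Fin 6, (∀ j : Fin 15, x ∈ φp j → y ∈ φp j) → y = x := by decide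

lemma noFixD : ∀ k : Fin 6,
    (Ttot k).image (fun s => s.image (fun p => p.image ![1,0,2,3,4,5])) ≠ Ttot k := by decide

lemma swapVec : ⇑(Equiv.swap (0 : Fin 6) 1) = ![1,0,2,3,4,5] := by
  funext i; fin_cases i <;> decide

/-! ### The six totals are totals -/

lemma build_total (v : Fin 5 → Finset (Finset (Fin 6)))
    (hs : ∀ a, IsSyntheme (v a))
    (hcard : (Finset.univ.image v).card = 5)
    (hcov : ∀ p : Finset (Fin 6), p.card = 2 → ∃ a, p ∈ v a)
    (hd : ∀ a b, a ≠ b → ∀ p ∈ v a, p ∉ v b) :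
    IsSynTotal (Finset.univ.image v) := by
  refine ⟨hcard, ?_, ?_⟩
  · intro s hsmem
    obtain ⟨a, _, rfl⟩ := Finset.mem_image.1 hsmem
    exact hs a
  · intro p hp
    obtain ⟨a, ha⟩ := hcov p hp
    refine ⟨v a, ⟨Finset.mem_image_of_mem v (Finset.mem_univ a), ha⟩, ?_⟩
    rintro s ⟨hsmem, hps⟩
    obtain ⟨b, _, rfl⟩ := Finset.mem_image.1 hsmem
    rcases eq_or_ne b a with rfl | hne
    · rfl
    · exact absurd hps fun hmem => hd b a hne p hmem ha

lemma isTot : ∀ k : Fin 6, IsSynTotal (Ttot k) :=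
  fun k => build_total (vtot k) (synIsSyn k) (cardD k) (covD k) (disjD k)

/-! ### Classification of totals -/

lemma syn_disj {s : Finset (Finset (Fin 6))} (h : IsSyntheme s) {p q : Finset (Fin 6)}
    (hp : p ∈ s) (hq : q ∈ s) (hne : p ≠ q) : ∀ x ∈ p, x ∉ q := by
  intro x hxp hxq
  obtain ⟨r, _, hu⟩ := h.2.2 x
  exact hne ((hu p ⟨hp, hxp⟩).trans (hu q ⟨hq, hxq⟩).symm)

lemma syn_idx {s : Finset (Finset (Fin 6))} (h : IsSyntheme s) : ∃ i : Fin 15, ψs i = s := by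
  obtain ⟨a, b, c, hab, hac, hbc, rfl⟩ := Finset.card_eq_three.1 h.1
  have hma : a ∈ ({a,b,c} : Finset (Finset (Fin 6))) := by simp
  have hmb : b ∈ ({a,b,c} : Finset (Finset (Fin 6))) := by simp
  have hmc : c ∈ ({a,b,c} : Finset (Finset (Fin 6))) := by simp
  obtain ⟨j1, hj1⟩ := idxP a (h.2.1 a hma)
  obtain ⟨j2, hj2⟩ := idxP b (h.2.1 b hmb)
  obtain ⟨j3, hj3⟩ := idxP c (h.2.1 c hmc)
  have g12 : ∀ x ∈ φp j1, x ∉ φp j2 := by rw [hj1, hj2]; exact syn_disj h hma hmb hab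
  have g13 : ∀ x ∈ φp j1, x ∉ φp j3 := by rw [hj1, hj3]; exact syn_disj h hma hmc hac
  have g23 : ∀ x ∈ φp j2, x ∉ φp j3 := by rw [hj2, hj3]; exact syn_disj h hmb hmc hbc
  have hcode := synD j1 j2 g12 j3 g13 g23
  obtain ⟨m, _, hm⟩ := Finset.mem_image.1 hcode
  refine ⟨m, ?_⟩
  rw [synCode m, hm]
  simp [Finset.image_insert, Finset.image_singleton, hj1, hj2, hj3]

lemma total_ndisj {t : Finset (Finset (Finset (Fin 6)))} (ht : IsSynTotal t)
    {s s' : Finset (Finset (Fin 6))} (hs : s ∈ t) (hs' : s' ∈ t) (hne : s ≠ s') :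
    ∀ p ∈ s, p ∉ s' := by
  intro p hp hp'
  obtain ⟨u, _, hu⟩ := ht.2.2 p ((ht.2.1 s hs).2.1 p hp)
  exact hne ((hu s ⟨hs, hp⟩).trans (hu s' ⟨hs', hp'⟩).symm)

lemma card_eq_five {α : Type*} [DecidableEq α] {t : Finset α} (h : t.card = 5) :
    ∃ a b c d e : α, t = {a,b,c,d,e} ∧ a ∉ ({b,c,d,e} : Finset α) ∧
      b ∉ ({c,d,e} : Finset α) ∧ c ≠ d ∧ c ≠ e ∧ d ≠ e := by
  obtain ⟨a, t4, ha, rfl, h4⟩ := Finset.card_eq_succ.1 h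
  obtain ⟨b, t3, hb, rfl, h3⟩ := Finset.card_eq_succ.1 h4
  obtain ⟨c, d, e, hcd, hce, hde, rfl⟩ := Finset.card_eq_three.1 h3
  exact ⟨a, b, c, d, e, rfl, ha, hb, hcd, hce, hde⟩

lemma tot_mem {t : Finset (Finset (Finset (Fin 6)))} (ht : IsSynTotal t) : t ∈ TotF := by
  obtain ⟨s1, s2, s3, s4, s5, rfl, ha, hb, hcd, hce, hde⟩ := card_eq_five ht.1
  have n12 : s1 ≠ s2 := fun e => ha (by rw [e]; simp)
  have n13 : s1 ≠ s3 := fun e => ha (by rw [e]; simp)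
  have n14 : s1 ≠ s4 := fun e => ha (by rw [e]; simp)
  have n15 : s1 ≠ s5 := fun e => ha (by rw [e]; simp)
  have n23 : s2 ≠ s3 := fun e => hb (by rw [e]; simp)
  have n24 : s2 ≠ s4 := fun e => hb (by rw [e]; simp)
  have n25 : s2 ≠ s5 := fun e => hb (by rw [e]; simp)
  have m1 : s1 ∈ ({s1,s2,s3,s4,s5} : Finset (Finset (Finset (Fin 6)))) := by simp
  have m2 : s2 ∈ ({s1,s2,s3,s4,s5} : Finset (Finset (Finset (Fin 6)))) := by simp
  have m3 : s3 ∈ ({s1,s2,s3,s4,s5} : Finset (Finset (Finset (Fin 6)))) := by simp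
  have m4 : s4 ∈ ({s1,s2,s3,s4,s5} : Finset (Finset (Finset (Fin 6)))) := by simp
  have m5 : s5 ∈ ({s1,s2,s3,s4,s5} : Finset (Finset (Finset (Fin 6)))) := by simp
  obtain ⟨i1, hi1⟩ := syn_idx (ht.2.1 s1 m1)
  obtain ⟨i2, hi2⟩ := syn_idx (ht.2.1 s2 m2)
  obtain ⟨i3, hi3⟩ := syn_idx (ht.2.1 s3 m3)
  obtain ⟨i4, hi4⟩ := syn_idx (ht.2.1 s4 m4)
  obtain ⟨i5, hi5⟩ := syn_idx (ht.2.1 s5 m5)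
  have g12 : SD i1 i2 := by unfold SD; rw [hi1, hi2]; exact total_ndisj ht m1 m2 n12
  have g13 : SD i1 i3 := by unfold SD; rw [hi1, hi3]; exact total_ndisj ht m1 m3 n13
  have g14 : SD i1 i4 := by unfold SD; rw [hi1, hi4]; exact total_ndisj ht m1 m4 n14
  have g15 : SD i1 i5 := by unfold SD; rw [hi1, hi5]; exact total_ndisj ht m1 m5 n15
  have g23 : SD i2 i3 := by unfold SD; rw [hi2, hi3]; exact total_ndisj ht m2 m3 n23
  have g24 : SD i2 i4 := by unfold SD; rw [hi2, hi4]; exact total_ndisj ht m2 m4 n24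
  have g25 : SD i2 i5 := by unfold SD; rw [hi2, hi5]; exact total_ndisj ht m2 m5 n25
  have g34 : SD i3 i4 := by unfold SD; rw [hi3, hi4]; exact total_ndisj ht m3 m4 hcd
  have g35 : SD i3 i5 := by unfold SD; rw [hi3, hi5]; exact total_ndisj ht m3 m5 hce
  have g45 : SD i4 i5 := by unfold SD; rw [hi4, hi5]; exact total_ndisj ht m4 m5 hde
  have hcode := totD i1 i2 g12 i3 g13 g23 i4 g14 g24 g34 i5 g15 g25 g35 g45
  obtain ⟨k, _, hk⟩ := Finset.mem_image.1 hcode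
  have : Ttot k = ({s1,s2,s3,s4,s5} : Finset (Finset (Finset (Fin 6)))) := by
    rw [← totCode k, hk]
    simp [Finset.image_insert, Finset.image_singleton, hi1, hi2, hi3, hi4, hi5]
  rw [← this]
  exact Finset.mem_image_of_mem Ttot (Finset.mem_univ k)

lemma mem_iff (t : Finset (Finset (Finset (Fin 6)))) : IsSynTotal t ↔ t ∈ TotF := by
  refine ⟨tot_mem, fun h => ?_⟩
  obtain ⟨k, _, rfl⟩ := Finset.mem_image.1 h
  exact isTot k

/-! ### The action of permutations on totals -/

lemma image_isSyntheme (π : Equiv.Perm (Fin 6)) {s : Finset (Finset (Fin 6))}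
    (h : IsSyntheme s) : IsSyntheme (s.image (fun p => p.image π)) := by
  obtain ⟨h1, h2, h3⟩ := h
  refine ⟨?_, ?_, ?_⟩
  · rw [Finset.card_image_of_injective _ (Finset.image_injective π.injective)]; exact h1
  · intro p hp
    obtain ⟨q, hq, rfl⟩ := Finset.mem_image.1 hp
    rw [Finset.card_image_of_injective _ π.injective]; exact h2 q hq
  · intro i
    obtain ⟨p, ⟨hps, hip⟩, hu⟩ := h3 (π.symm i)
    refine ⟨p.image π, ⟨Finset.mem_image_of_mem _ hps,
      Finset.mem_image.2 ⟨π.symm i, hip, π.apply_symm_apply i⟩⟩, ?_⟩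
    rintro q ⟨hqmem, hiq⟩
    obtain ⟨q0, hq0, rfl⟩ := Finset.mem_image.1 hqmem
    obtain ⟨x, hx, hxi⟩ := Finset.mem_image.1 hiq
    have hxv : π.symm i = x := by rw [← hxi, Equiv.symm_apply_apply]
    have : q0 = p := hu q0 ⟨hq0, hxv ▸ hx⟩
    rw [this]

lemma image_isSynTotal (π : Equiv.Perm (Fin 6)) {t : Finset (Finset (Finset (Fin 6)))}
    (h : IsSynTotal t) : IsSynTotal (t.image (fun s => s.image (fun p => p.image π))) := by
  obtain ⟨h1, h2, h3⟩ := h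
  refine ⟨?_, ?_, ?_⟩
  · rw [Finset.card_image_of_injective _
      (Finset.image_injective (Finset.image_injective π.injective))]
    exact h1
  · intro s hs
    obtain ⟨s0, hs0, rfl⟩ := Finset.mem_image.1 hs
    exact image_isSyntheme π (h2 s0 hs0)
  · intro p hp
    have hp0 : (p.image ⇑π.symm).card = 2 := by
      rw [Finset.card_image_of_injective _ π.symm.injective]; exact hp
    obtain ⟨s, ⟨hst, hps⟩, hu⟩ := h3 _ hp0
    have hpimg : (p.image ⇑π.symm).image ⇑π = p := by
      rw [Finset.image_image]
      simp [Function.comp_def]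
    refine ⟨s.image (fun q => q.image ⇑π), ⟨Finset.mem_image_of_mem _ hst,
      Finset.mem_image.2 ⟨p.image ⇑π.symm, hps, hpimg⟩⟩, ?_⟩
    rintro q ⟨hqmem, hpq⟩
    obtain ⟨s0, hs0, rfl⟩ := Finset.mem_image.1 hqmem
    obtain ⟨r, hr, hrp⟩ := Finset.mem_image.1 hpq
    have hrv : p.image ⇑π.symm = r := by
      rw [← hrp, Finset.image_image]
      simp [Function.comp_def]
    have : s0 = s := hu s0 ⟨hs0, hrv ▸ hr⟩
    rw [this]

def actT (π : Equiv.Perm (Fin 6)) (t : SynTotal) : SynTotal :=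
  ⟨t.val.image (fun s => s.image (fun p => p.image π)), image_isSynTotal π t.2⟩

lemma actT_actT (π ρ : Equiv.Perm (Fin 6)) (t : SynTotal) :
    actT π (actT ρ t) = actT (π * ρ) t := by
  apply Subtype.ext
  show (t.val.image _).image _ = t.val.image _
  simp [Finset.image_image, Function.comp_def]

lemma actT_one (t : SynTotal) : actT 1 t = t := by
  apply Subtype.ext
  show t.val.image _ = t.val
  simp

def σ₀ : Equiv.Perm (Fin 6) →* Equiv.Perm SynTotal where
  toFun π :=
    { toFun := actT π
      invFun := actT π⁻¹
      left_inv := fun t => by rw [actT_actT, inv_mul_cancel]; exact actT_one t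
      right_inv := fun t => by rw [actT_actT, mul_inv_cancel]; exact actT_one t }
  map_one' := Equiv.ext fun t => actT_one t
  map_mul' := fun π ρ => Equiv.ext fun t => (actT_actT π ρ t).symm

/-! ### σ₀ is injective -/

lemma fix_all_points (π : Equiv.Perm (Fin 6))
    (H : ∀ k : Fin 6, (Ttot k).image (fun s => s.image (fun p => p.image π)) = Ttot k) :
    ∀ x, π x = x := by
  have hsyn : ∀ i : Fin 15, (ψs i).image (fun p => p.image π) = ψs i := by
    intro i
    have hmem : ∀ k, ψs i ∈ Ttot k → (ψs i).image (fun p => p.image π) ∈ Ttot k := by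
      intro k hk
      rw [← H k]
      exact Finset.mem_image_of_mem _ hk
    obtain ⟨k0, hk0⟩ := existsK i
    obtain ⟨a, _, ha⟩ := Finset.mem_image.1 (hmem k0 hk0)
    obtain ⟨i', hi'⟩ := memTable k0 a
    have hieq : i' = i := fingS i i' (fun k hk => by rw [hi', ha]; exact hmem k hk)
    have hfin := hi'.trans ha
    rw [hieq] at hfin
    exact hfin.symm
  have hpair : ∀ j : Fin 15, (φp j).image π = φp j := by
    intro j
    obtain ⟨i0, hi0⟩ := existsI j
    have hp' : (φp j).image ⇑π ∈ ψs i0 := by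
      rw [← hsyn i0]; exact Finset.mem_image_of_mem _ hi0
    obtain ⟨j', hj'⟩ := elemSyn i0 _ hp'
    have hjeq : j' = j := fingP j j' (fun i hi => by
      rw [hj']
      rw [← hsyn i]
      exact Finset.mem_image_of_mem _ hi)
    have hfin := hj'
    rw [hjeq] at hfin
    exact hfin.symm
  intro x
  exact fingX x (π x) (fun j hx => by rw [← hpair j]; exact Finset.mem_image_of_mem _ hx)

lemma σ₀_inj : Function.Injective σ₀ := by
  rw [injective_iff_map_eq_one]
  intro π hπ
  have H : ∀ k : Fin 6, (Ttot k).image (fun s => s.image (fun p => p.image π)) = Ttot k := by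
    intro k
    have : σ₀ π ⟨Ttot k, isTot k⟩ = ⟨Ttot k, isTot k⟩ := by rw [hπ]; rfl
    exact congrArg Subtype.val this
  exact Equiv.ext fun x => (fix_all_points π H x).trans rfl

/-! ### Main theorem -/

theorem synthematic_totals_outer :
    Nat.card SynTotal = 6 ∧
    ∃ σ : Equiv.Perm (Fin 6) →* Equiv.Perm SynTotal,
      (∀ (π : Equiv.Perm (Fin 6)) (t : SynTotal),
        ((σ π) t).val = t.val.image (fun s => s.image (fun p => p.image π))) ∧
      Function.Injective σ ∧
      ∀ e : SynTotal ≃ Fin 6,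
        ¬ ∃ h : Equiv.Perm (Fin 6), ∀ g : Equiv.Perm (Fin 6),
          (Equiv.permCongr e) (σ g) = h * g * h⁻¹ := by
  constructor
  · have e1 : SynTotal ≃ {t // t ∈ TotF} := Equiv.subtypeEquivRight mem_iff
    rw [Nat.card_congr e1, Nat.card_eq_fintype_card, Fintype.card_coe, cardTotF]
  · refine ⟨σ₀, fun π t => rfl, σ₀_inj, ?_⟩
    rintro e ⟨h, hh⟩
    have hτ := hh (Equiv.swap 0 1)
    have h1 : (Equiv.permCongr e) (σ₀ (Equiv.swap 0 1)) (h 2) = h 2 := by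
      rw [hτ]
      show h ((Equiv.swap 0 1) (h⁻¹ (h 2))) = h 2
      rw [show h⁻¹ (h 2) = 2 from h.symm_apply_apply 2]
      have : (Equiv.swap (0 : Fin 6) 1) 2 = 2 := by decide
      rw [this]
    rw [Equiv.permCongr_apply] at h1
    have hfix : σ₀ (Equiv.swap 0 1) (e.symm (h 2)) = e.symm (h 2) := by
      apply e.injective
      rw [h1, Equiv.apply_symm_apply]
    have hval := congrArg Subtype.val hfix
    obtain ⟨k, _, hk⟩ := Finset.mem_image.1 (tot_mem (e.symm (h 2)).2)
    apply noFixD k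
    rw [hk, ← swapVec]
    exact hval
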